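/- For every odd n≥3, the looped n-cycle with its cyclic symmetry, (LC_n,ψ_n), is C_n-isostatic in ℝ². -/

import Mathlib

open Finset
open scoped Classical

/-- A looped simple graph `G = (V, E, L)`: a finite vertex set `vs`, a finite set `es` of
edges (unordered pairs of distinct vertices of `vs`, no multiple edges) and a finite set `ls`
of loops, each loop `l` being incident to the vertex `loopAt l ∈ vs`. -/
structure LGraph (V L : Type) where
  vs : Finset V
  es : Finset (Sym2 V)
  ls : Finset L
  loopAt : L → V
  es_not_diag : ∀ e ∈ es, ¬ e.IsDiag
  es_mem : ∀ e ∈ es, ∀ u ∈ e, u ∈ vs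
  ls_mem : ∀ l ∈ ls, loopAt l ∈ vs

namespace LGraph

variable {V L : Type}

/-- `i_E(X)`: the number of edges induced by a vertex set `X`. -/
noncomputable def iE (H : LGraph V L) (X : Finset V) : ℕ :=
  (H.es.filter fun e => ∀ u ∈ e, u ∈ X).card

/-- `i_L(X)`: the number of loops induced by a vertex set `X`. -/
noncomputable def iL (H : LGraph V L) (X : Finset V) : ℕ :=
  (H.ls.filter fun l => H.loopAt l ∈ X).card

/-- `i_{E+L}(X)`: the number of edges and loops induced by a vertex set `X`. -/
noncomputable def iEL (H : LGraph V L) (X : Finset V) : ℕ :=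
  H.iE X + H.iL X

/-- `G` is sparse if `|E'| + |L'| ≤ 2|V'|` for all subgraphs and `|E'| ≤ 2|V'| - 3` for all
loopless subgraphs with at least one edge (formulated via induced counts). -/
def Sparse (H : LGraph V L) : Prop :=
  (∀ X ⊆ H.vs, H.iEL X ≤ 2 * X.card) ∧
  (∀ X ⊆ H.vs, 0 < H.iE X → H.iE X + 3 ≤ 2 * X.card)

/-- `G` is tight if it is sparse and `|E| + |L| = 2|V|`. -/
def Tight (H : LGraph V L) : Prop :=
  H.Sparse ∧ H.es.card + H.ls.card = 2 * H.vs.card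

/-- `k_X = 2|X| - i_{E+L}(X)`. -/
noncomputable def kval (H : LGraph V L) (X : Finset V) : ℤ :=
  2 * (X.card : ℤ) - (H.iEL X : ℤ)

/-- `k̄_X = 2|X| - i_E(X)`. -/
noncomputable def kbar (H : LGraph V L) (X : Finset V) : ℤ :=
  2 * (X.card : ℤ) - (H.iE X : ℤ)

/-- `d(A,B)`: the number of edges with one endpoint in `A \ B` and the other in `B \ A`. -/
noncomputable def dAB (H : LGraph V L) (A B : Finset V) : ℕ :=
  (H.es.filter fun e =>
    ∃ a ∈ e, ∃ b ∈ e, a ≠ b ∧ (a ∈ A ∧ a ∉ B) ∧ (b ∈ B ∧ b ∉ A)).card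

/-- `X` is `k`-critical if `i_{E+L}(X) = 2|X| - k`. -/
def kCrit (H : LGraph V L) (k : ℕ) (X : Finset V) : Prop :=
  X ⊆ H.vs ∧ H.iEL X + k = 2 * X.card

/-- `X` is `k`-edge-critical if `i_E(X) = 2|X| - k`. -/
def kEdgeCrit (H : LGraph V L) (k : ℕ) (X : Finset V) : Prop :=
  X ⊆ H.vs ∧ H.iE X + k = 2 * X.card

/-- The edges incident to a vertex `v`. -/
noncomputable def edgesAt (H : LGraph V L) (v : V) : Finset (Sym2 V) :=
  H.es.filter fun e => v ∈ e

/-- The loops incident to a vertex `v`. -/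
noncomputable def loopsAt (H : LGraph V L) (v : V) : Finset L :=
  H.ls.filter fun l => H.loopAt l = v

/-- The set `N(v)` of neighbours of a vertex `v`. -/
noncomputable def nbrs (H : LGraph V L) (v : V) : Finset V :=
  H.vs.filter fun u => s(v, u) ∈ H.es

end LGraph

/-- A `Γ`-symmetric structure on a looped simple graph: an action of `Γ` by automorphisms,
i.e. compatible permutations of vertices and loops preserving edge and loop incidences,
such that a loop may only be fixed by elements of order at most 2. -/
structure LAction (Γ : Type) [Group Γ] {V L : Type} (H : LGraph V L) where
  toV : Γ →* Equiv.Perm V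
  toL : Γ →* Equiv.Perm L
  vs_inv : ∀ (γ : Γ), ∀ u ∈ H.vs, toV γ u ∈ H.vs
  es_inv : ∀ (γ : Γ), ∀ e ∈ H.es, Sym2.map (toV γ) e ∈ H.es
  ls_inv : ∀ (γ : Γ), ∀ l ∈ H.ls, toL γ l ∈ H.ls
  loop_compat : ∀ (γ : Γ), ∀ l ∈ H.ls, H.loopAt (toL γ l) = toV γ (H.loopAt l)
  loop_fix_order : ∀ (γ : Γ), ∀ l ∈ H.ls, toL γ l = l → γ * γ = 1

section Symmetry

variable {Γ V L : Type} [Group Γ] {H : LGraph V L}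

/-- The vertices fixed by the group element `γ`. -/
noncomputable def fixedV (act : LAction Γ H) (γ : Γ) : Finset V :=
  H.vs.filter fun u => act.toV γ u = u

/-- The edges fixed by the group element `γ`. -/
noncomputable def fixedE (act : LAction Γ H) (γ : Γ) : Finset (Sym2 V) :=
  H.es.filter fun e => Sym2.map (act.toV γ) e = e

/-- The loops fixed by the group element `γ`. -/
noncomputable def fixedL (act : LAction Γ H) (γ : Γ) : Finset L :=
  H.ls.filter fun l => act.toL γ l = l

/-- No vertex, edge or loop is fixed by any non-identity element. -/
def NoFixAll (act : LAction Γ H) : Prop :=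
  ∀ γ : Γ, γ ≠ 1 → fixedV act γ = ∅ ∧ fixedE act γ = ∅ ∧ fixedL act γ = ∅

/-- The fixed-element condition for the group `C₂`: either nothing is fixed by the
non-trivial element, or exactly one vertex, no edge and exactly two loops are fixed. -/
def C2Cond (act : LAction Γ H) : Prop :=
  NoFixAll act ∨
    ∀ γ : Γ, γ ≠ 1 →
      (fixedV act γ).card = 1 ∧ fixedE act γ = ∅ ∧ (fixedL act γ).card = 2

/-- The fixed-element condition for the group `C₄` with generator `g`. -/
def C4Cond (act : LAction Γ H) (g : Γ) : Prop :=
  NoFixAll act ∨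
    ((H.vs.filter fun u => ∀ γ : Γ, act.toV γ u = u).card = 1 ∧
      (∀ γ : Γ, γ ≠ 1 → fixedE act γ = ∅) ∧
      (fixedL act (g * g)).card = 2 ∧
      fixedL act g = ∅ ∧ fixedL act (g * g * g) = ∅)

/-- `(G,φ)` is `C₂`-tight. -/
def C2Tight (act : LAction Γ H) : Prop :=
  H.Tight ∧ C2Cond act

/-- `(G,φ)` is `Cₙ`-tight for `n ≥ 3`, `n ≠ 4`: tight and nothing is fixed by
non-identity elements. -/
def CnTightOdd (act : LAction Γ H) : Prop :=
  H.Tight ∧ NoFixAll act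

/-- `(G,φ)` is `Cₙ`-tight, where `g` is a generator of the cyclic group `Γ` of order `n`. -/
def CnTightFull (n : ℕ) (act : LAction Γ H) (g : Γ) : Prop :=
  H.Tight ∧ (n = 2 → C2Cond act) ∧ (n = 4 → C4Cond act g) ∧
    (n ≠ 2 → n ≠ 4 → NoFixAll act)

end Symmetry
section Framework

variable {Γ V L : Type} [Group Γ]

/-- The rigidity matrix `R(G,p,q)` of a linearly constrained framework in the plane:
rows are indexed by edges and loops, columns by (vertex, coordinate) pairs.  The row of an
edge `uv` has `p u - p v` in the two columns of `u` and `p v - p u` in the two columns of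
`v`; the row of a loop `l` has `q l` in the two columns of the vertex incident to `l`. -/
noncomputable def rigidityMatrix (H : LGraph V L)
    (p : V → Fin 2 → ℝ) (q : L → Fin 2 → ℝ) :
    Matrix (↥H.es ⊕ ↥H.ls) (↥H.vs × Fin 2) ℝ :=
  fun r c =>
    Sum.elim
      (fun e : ↥H.es =>
        Sym2.lift
          ⟨fun a b =>
            (if (c.1 : V) = a then p a c.2 - p b c.2 else 0) +
            (if (c.1 : V) = b then p b c.2 - p a c.2 else 0),
           fun a b => add_comm _ _⟩ (e : Sym2 V))
      (fun l : ↥H.ls => if (c.1 : V) = H.loopAt (l : L) then q (l : L) c.2 else 0) r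

/-- A linearly constrained framework is isostatic if it is infinitesimally rigid
(`rank R(G,p,q) = 2|V|`) and independent (the rows of `R(G,p,q)` are linearly
independent). -/
def IsIsostatic (H : LGraph V L) (p : V → Fin 2 → ℝ) (q : L → Fin 2 → ℝ) : Prop :=
  (rigidityMatrix H p q).rank = 2 * H.vs.card ∧
    LinearIndependent ℝ (fun r => rigidityMatrix H p q r)

/-- The framework `(G,p,q)` is `Γ`-symmetric with respect to the action `act` (i.e. `φ`)
and the orthogonal representation `τ`. -/
def IsSymFramework {H : LGraph V L} (act : LAction Γ H)
    (τ : Γ →* Matrix (Fin 2) (Fin 2) ℝ)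
    (p : V → Fin 2 → ℝ) (q : L → Fin 2 → ℝ) : Prop :=
  (∀ (γ : Γ), ∀ v ∈ H.vs, (τ γ).mulVec (p v) = p (act.toV γ v)) ∧
  (∀ (γ : Γ), orderOf γ ≠ 2 → ∀ l ∈ H.ls, (τ γ).mulVec (q l) = q (act.toL γ l)) ∧
  (∀ (γ : Γ), τ γ = -1 → ∀ l ∈ H.ls, act.toL γ l = l →
      (τ γ).mulVec (q l) = - q (act.toL γ l)) ∧
  (∀ (γ : Γ), (τ γ).det = -1 → ∀ l ∈ H.ls, act.toL γ l = l →
      ((τ γ).mulVec (q l) = q (act.toL γ l) ∨ (τ γ).mulVec (q l) = - q (act.toL γ l)))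

/-- `(G,φ)` is `τ(Γ)`-isostatic: some `Γ`-symmetric framework `(G,p,q)` is isostatic. -/
def IsTGIsostatic {H : LGraph V L} (act : LAction Γ H)
    (τ : Γ →* Matrix (Fin 2) (Fin 2) ℝ) : Prop :=
  ∃ (p : V → Fin 2 → ℝ) (q : L → Fin 2 → ℝ),
    Set.InjOn p ↑H.vs ∧ IsSymFramework act τ p q ∧ IsIsostatic H p q

/-- The matrix of the rotation `cₙ` by `2π/n` about the origin. -/
noncomputable def rotMat (n : ℕ) : Matrix (Fin 2) (Fin 2) ℝ :=
  !![Real.cos (2 * Real.pi / n), - Real.sin (2 * Real.pi / n);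
     Real.sin (2 * Real.pi / n), Real.cos (2 * Real.pi / n)]

end Framework
namespace Statement7Aux

noncomputable def ang (a : ℝ) : Matrix (Fin 2) (Fin 2) ℝ :=
  !![Real.cos a, -Real.sin a; Real.sin a, Real.cos a]

lemma ang_mulVec (a : ℝ) (x : Fin 2 → ℝ) :
    (ang a).mulVec x = ![Real.cos a * x 0 - Real.sin a * x 1,
                         Real.sin a * x 0 + Real.cos a * x 1] := by
  funext i
  fin_cases i <;>
    simp [ang, Matrix.mulVec, dotProduct, Fin.sum_univ_two] <;> ring_nf

lemma ang_mulVec_e1 (a : ℝ) : (ang a).mulVec ![1, 0] = ![Real.cos a, Real.sin a] := by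
  rw [ang_mulVec]; norm_num

lemma ang_mulVec_e2 (a : ℝ) : (ang a).mulVec ![0, -1] = ![Real.sin a, -Real.cos a] := by
  rw [ang_mulVec]; norm_num

lemma ang_mul (a b : ℝ) : ang a * ang b = ang (a + b) := by
  ext i j
  fin_cases i <;> fin_cases j <;>
    simp [ang, Matrix.mul_apply, Fin.sum_univ_two, Real.cos_add, Real.sin_add] <;> ring

lemma ang_zero : ang 0 = 1 := by
  ext i j
  fin_cases i <;> fin_cases j <;> simp [ang, Matrix.one_apply]

lemma ang_pow (a : ℝ) (k : ℕ) : (ang a) ^ k = ang (k * a) := by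
  induction k with
  | zero => simp [ang_zero]
  | succ k ih =>
    rw [pow_succ, ih, ang_mul]
    push_cast
    ring_nf

lemma ang_det (a : ℝ) : (ang a).det = 1 := by
  simp [ang, Matrix.det_fin_two_of]
  nlinarith [Real.sin_sq_add_cos_sq a]

lemma sum_two_support {ι : Type} [Fintype ι] (f : ι → ℝ) (a b : ι) (hab : a ≠ b)
    (h : ∀ c, c ≠ a → c ≠ b → f c = 0) : ∑ c, f c = f a + f b := by
  classical
  rw [← Finset.sum_pair hab]
  refine (Finset.sum_subset (Finset.subset_univ _) ?_).symm
  intro x _ hx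
  simp only [Finset.mem_insert, Finset.mem_singleton] at hx
  push_neg at hx
  exact h x hx.1 hx.2

lemma sum_subtype_ite {α : Type} (s : Finset α) (w : α) (hw : w ∈ s) (f : {x // x ∈ s} → ℝ) :
    (∑ v : {x // x ∈ s}, if (v : α) = w then f v else 0) = f ⟨w, hw⟩ := by
  rw [Fintype.sum_eq_single (⟨w, hw⟩ : {x // x ∈ s})]
  · simp
  · intro b hb
    rw [if_neg]
    intro hbw
    exact hb (Subtype.ext hbw)

end Statement7Aux

open Statement7Aux Module LinearMap in
set_option maxHeartbeats 2000000 in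
/-- for every odd `n ≥ 3`, the looped `n`-cycle with its cyclic symmetry,
`(LCₙ, ψₙ)`, is `Cₙ`-isostatic in the plane. -/
theorem statement7 {Γ V L : Type} [Group Γ] [Fintype Γ] (n : ℕ) (hn : 3 ≤ n) (hodd : Odd n)
    (g : Γ) (hord : orderOf g = n) (hgen : ∀ x : Γ, x ∈ Subgroup.zpowers g)
    (H : LGraph V L) (act : LAction Γ H) (v₀ : V) (hv₀ : v₀ ∈ H.vs)
    (hfree : Function.Injective (fun γ : Γ => act.toV γ v₀))
    (hvs : H.vs = Finset.image (fun γ : Γ => act.toV γ v₀) Finset.univ)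
    (hes : H.es = Finset.image (fun γ : Γ => s(act.toV γ v₀, act.toV (g * γ) v₀)) Finset.univ)
    (hls : ∀ v ∈ H.vs, (H.ls.filter fun l => H.loopAt l = v).card = 1)
    (τ : Γ →* Matrix (Fin 2) (Fin 2) ℝ)
    (hτO : ∀ γ : Γ, τ γ ∈ Matrix.orthogonalGroup (Fin 2) ℝ)
    (hτg : τ g = rotMat n) :
    IsTGIsostatic act τ := by
  classical
  have hn0 : 0 < n := by omega
  set θ : ℝ := 2 * Real.pi / n with hθdef
  have hτg' : τ g = ang θ := hτg
  -- every element of Γ is a small power of g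
  have hpow : ∀ γ : Γ, ∃ k : ℕ, k < n ∧ g ^ k = γ := by
    intro γ
    obtain ⟨m, hm⟩ := hgen γ
    have hne : ((n : ℤ)) ≠ 0 := by exact_mod_cast hn0.ne'
    have h1 : 0 ≤ m % (n : ℤ) := Int.emod_nonneg m hne
    have h2 : m % (n : ℤ) < n := Int.emod_lt_of_pos m (by exact_mod_cast hn0)
    refine ⟨(m % (n : ℤ)).toNat, by omega, ?_⟩
    rw [← hm, ← zpow_natCast, Int.toNat_of_nonneg h1]
    rw [show ((n : ℤ)) = (orderOf g : ℤ) by rw [hord]]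
    exact zpow_mod_orderOf g m
  have hτangk : ∀ k : ℕ, τ (g ^ k) = ang (k * θ) := by
    intro k
    rw [map_pow, hτg', ang_pow]
  have hτang : ∀ γ : Γ, ∃ a : ℝ, τ γ = ang a := by
    intro γ
    obtain ⟨k, _, rfl⟩ := hpow γ
    exact ⟨k * θ, hτangk k⟩
  -- cardinality of the group
  have htop : Subgroup.zpowers g = ⊤ := by
    rw [Subgroup.eq_top_iff']
    exact hgen
  have hcardΓ : Fintype.card Γ = n := by
    have h1 : Nat.card (Subgroup.zpowers g) = n := by rw [Nat.card_zpowers, hord]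
    rw [htop, Subgroup.card_top, Nat.card_eq_fintype_card] at h1
    exact h1
  -- elements of odd-order group fixing loops are trivial
  have hsq1 : ∀ γ : Γ, γ * γ = 1 → γ = 1 := by
    intro γ hγ
    have h2 : orderOf γ ∣ 2 := orderOf_dvd_of_pow_eq_one (by rw [pow_two]; exact hγ)
    have hnn : orderOf γ ∣ n := hcardΓ ▸ orderOf_dvd_card
    rcases (Nat.dvd_prime Nat.prime_two).mp h2 with h | h
    · exact orderOf_eq_one_iff.mp h
    · exfalso
      have h2n : (2 : ℕ) ∣ n := h ▸ hnn
      obtain ⟨u, hu⟩ := h2n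
      obtain ⟨t, ht⟩ := hodd
      omega
  -- membership of orbit vertices
  have hvmem : ∀ γ : Γ, act.toV γ v₀ ∈ H.vs := fun γ => by
    rw [hvs]; exact Finset.mem_image_of_mem _ (Finset.mem_univ γ)
  have hemem : ∀ γ : Γ, s(act.toV γ v₀, act.toV (g * γ) v₀) ∈ H.es := fun γ => by
    rw [hes]; exact Finset.mem_image_of_mem _ (Finset.mem_univ γ)
  -- the configuration
  set p : V → Fin 2 → ℝ := fun v =>
    if h : ∃ γ : Γ, act.toV γ v₀ = v then (τ h.choose).mulVec ![1, 0] else 0 with hpdef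
  set q : L → Fin 2 → ℝ := fun l =>
    if h : ∃ γ : Γ, act.toV γ v₀ = H.loopAt l then (τ h.choose).mulVec ![0, -1] else 0 with hqdef
  have hpv : ∀ γ : Γ, p (act.toV γ v₀) = (τ γ).mulVec ![1, 0] := by
    intro γ
    have h : ∃ δ : Γ, act.toV δ v₀ = act.toV γ v₀ := ⟨γ, rfl⟩
    have hc : h.choose = γ := hfree h.choose_spec
    simp only [hpdef, dif_pos h, hc]
  have hql : ∀ l : L, ∀ γ : Γ, H.loopAt l = act.toV γ v₀ → q l = (τ γ).mulVec ![0, -1] := by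
    intro l γ hlγ
    have h : ∃ δ : Γ, act.toV δ v₀ = H.loopAt l := ⟨γ, hlγ.symm⟩
    have hc : h.choose = γ := hfree (h.choose_spec.trans hlγ)
    simp only [hqdef, dif_pos h, hc]
  set P : Γ → Fin 2 → ℝ := fun γ => (τ γ).mulVec ![1, 0] with hPdef
  have hPang : ∀ γ : Γ, ∃ a : ℝ, τ γ = ang a ∧ P γ = ![Real.cos a, Real.sin a] := by
    intro γ
    obtain ⟨a, ha⟩ := hτang γ
    exact ⟨a, ha, by rw [hPdef]; simp only; rw [ha, ang_mulVec_e1]⟩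
  have hPnorm : ∀ γ : Γ, P γ 0 ^ 2 + P γ 1 ^ 2 = 1 := by
    intro γ
    obtain ⟨a, -, ha⟩ := hPang γ
    rw [ha]
    simp [Real.cos_sq_add_sin_sq]
  have hQ : ∀ γ : Γ, (τ γ).mulVec ![0, -1] = ![P γ 1, -(P γ 0)] := by
    intro γ
    obtain ⟨a, ha, hPa⟩ := hPang γ
    rw [ha, ang_mulVec_e2, hPa]
    simp
  have hPg : ∀ γ : Γ, P (g * γ) = ![Real.cos θ * P γ 0 - Real.sin θ * P γ 1,
      Real.sin θ * P γ 0 + Real.cos θ * P γ 1] := by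
    intro γ
    have : P (g * γ) = (ang θ).mulVec (P γ) := by
      rw [hPdef]; simp only
      rw [map_mul, hτg', ← Matrix.mulVec_mulVec]
    rw [this, ang_mulVec]
  -- injectivity of P (hence of p on the vertex set)
  have hPinj : ∀ γ γ' : Γ, P γ = P γ' → γ = γ' := by
    intro γ γ' hPP
    obtain ⟨k, hk, rfl⟩ := hpow γ
    obtain ⟨k', hk', rfl⟩ := hpow γ'
    have h1 : P (g ^ k) = ![Real.cos (k * θ), Real.sin (k * θ)] := by
      rw [hPdef]; simp only; rw [hτangk, ang_mulVec_e1]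
    have h2 : P (g ^ k') = ![Real.cos (k' * θ), Real.sin (k' * θ)] := by
      rw [hPdef]; simp only; rw [hτangk, ang_mulVec_e1]
    rw [h1, h2] at hPP
    have hc : Real.cos (k * θ) = Real.cos (k' * θ) := by
      have := congrFun hPP 0; simpa using this
    have hsn : Real.sin (k * θ) = Real.sin (k' * θ) := by
      have := congrFun hPP 1; simpa using this
    have hone : Real.cos ((k : ℝ) * θ - (k' : ℝ) * θ) = 1 := by
      rw [Real.cos_sub, hc, hsn]
      nlinarith [Real.sin_sq_add_cos_sq ((k' : ℝ) * θ)]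
    obtain ⟨m, hm⟩ := (Real.cos_eq_one_iff _).mp hone
    have hπ : (0 : ℝ) < Real.pi := Real.pi_pos
    have hnR : (0 : ℝ) < n := by exact_mod_cast hn0
    have hmn : (m : ℝ) * n = (k : ℝ) - k' := by
      have h3 : (m : ℝ) * (2 * Real.pi) * n = ((k : ℝ) - k') * θ * n := by rw [hm]; ring
      rw [hθdef] at h3
      field_simp at h3
      nlinarith [h3]
    have hmn' : m * (n : ℤ) = (k : ℤ) - (k' : ℤ) := by
      exact_mod_cast hmn
    have hkk'' : (k : ℤ) = k' := by
      rcases lt_trichotomy m 0 with hm0 | hm0 | hm0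
      · have h1 : m ≤ -1 := by omega
        have h2 : m * (n : ℤ) ≤ -1 * n :=
          mul_le_mul_of_nonneg_right h1 (by positivity)
        have h3 : (k : ℤ) < n := by exact_mod_cast hk
        have h4 : (0 : ℤ) ≤ k' := by positivity
        omega
      · rw [hm0, zero_mul] at hmn'; omega
      · have h1 : (1 : ℤ) ≤ m := by omega
        have h2 : 1 * (n : ℤ) ≤ m * n :=
          mul_le_mul_of_nonneg_right h1 (by positivity)
        have h3 : (k' : ℤ) < n := by exact_mod_cast hk'
        have h4 : (0 : ℤ) ≤ k := by positivity
        omega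
    have hkk' : k = k' := by exact_mod_cast hkk''
    rw [hkk']
  -- simple consequences
  have hg1 : g ≠ 1 := by
    intro h
    rw [h, orderOf_one] at hord
    omega
  have hgg1 : g * g ≠ 1 := by
    intro h
    have h2 : orderOf g ∣ 2 := orderOf_dvd_of_pow_eq_one (by rw [pow_two]; exact h)
    rw [hord] at h2
    have := Nat.le_of_dvd (by norm_num) h2
    omega
  -- cardinalities
  have hcard_vs : H.vs.card = n := by
    rw [hvs, Finset.card_image_of_injective _ hfree, Finset.card_univ, hcardΓ]
  have hedge_inj : Function.Injective
      (fun γ : Γ => s(act.toV γ v₀, act.toV (g * γ) v₀)) := by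
    intro γ γ' h
    simp only [Sym2.eq_iff] at h
    rcases h with ⟨h1, _⟩ | ⟨h1, h2⟩
    · exact hfree h1
    · exfalso
      have e1 : γ = g * γ' := hfree h1
      have e2 : g * γ = γ' := hfree h2
      apply hgg1
      have : γ = (g * g) * γ := by
        conv_lhs => rw [e1, ← e2]
        group
      have h3 : (1 : Γ) * γ = (g * g) * γ := by rw [one_mul]; exact this
      exact (mul_right_cancel h3).symm
  have hcard_es : H.es.card = n := by
    rw [hes, Finset.card_image_of_injective _ hedge_inj, Finset.card_univ, hcardΓ]
  have hcard_ls : H.ls.card = n := by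
    rw [Finset.card_eq_sum_card_fiberwise H.ls_mem]
    rw [Finset.sum_congr rfl (fun v hv => hls v hv)]
    simp [hcard_vs]
  -- every orbit vertex carries a loop
  have hloop : ∀ γ : Γ, ∃ l, l ∈ H.ls ∧ H.loopAt l = act.toV γ v₀ := by
    intro γ
    obtain ⟨l, hl⟩ := Finset.card_eq_one.mp (hls _ (hvmem γ))
    have hlm : l ∈ H.ls.filter fun l => H.loopAt l = act.toV γ v₀ :=
      hl ▸ Finset.mem_singleton_self l
    rw [Finset.mem_filter] at hlm
    exact ⟨l, hlm.1, hlm.2⟩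
  -- cos θ ≠ 1
  have hπ : (0 : ℝ) < Real.pi := Real.pi_pos
  have hnR : (0 : ℝ) < n := by exact_mod_cast hn0
  have hcosθ : Real.cos θ ≠ 1 := by
    intro h
    obtain ⟨m, hm⟩ := (Real.cos_eq_one_iff _).mp h
    have hmn : (m : ℝ) * n = 1 := by
      have h3 : (m : ℝ) * (2 * Real.pi) * n = θ * n := by rw [hm]
      rw [hθdef] at h3
      field_simp at h3
      nlinarith [h3]
    have hmn' : m * (n : ℤ) = 1 := by exact_mod_cast hmn
    have h3 : (3 : ℤ) ≤ n := by exact_mod_cast hn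
    rcases lt_trichotomy m 0 with hm0 | hm0 | hm0
    · have h1 : m ≤ -1 := by omega
      have h2 : m * (n : ℤ) ≤ -1 * n := mul_le_mul_of_nonneg_right h1 (by positivity)
      omega
    · rw [hm0, zero_mul] at hmn'; omega
    · have h1 : (1 : ℤ) ≤ m := by omega
      have h2 : 1 * (n : ℤ) ≤ m * n := mul_le_mul_of_nonneg_right h1 (by positivity)
      omega
  have hpP : ∀ γ : Γ, p (act.toV γ v₀) = P γ := fun γ => hpv γ
  -- THE KERNEL LEMMA
  have hker : ∀ m : (↥H.vs × Fin 2) → ℝ,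
      (rigidityMatrix H p q).mulVec m = 0 → m = 0 := by
    intro m hm
    set m' : Γ → Fin 2 → ℝ := fun γ i => m (⟨act.toV γ v₀, hvmem γ⟩, i) with hm'def
    set sc : Γ → ℝ := fun γ => P γ 0 * m' γ 0 + P γ 1 * m' γ 1 with hscdef
    -- loop equations
    have hloopEq : ∀ γ : Γ, P γ 1 * m' γ 0 - P γ 0 * m' γ 1 = 0 := by
      intro γ
      obtain ⟨l, hl, hla⟩ := hloop γ
      have h0 := congrFun hm (Sum.inr ⟨l, hl⟩)
      have hwm : H.loopAt l ∈ H.vs := H.ls_mem l hl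
      have hEval : (rigidityMatrix H p q).mulVec m (Sum.inr ⟨l, hl⟩) =
          q l 0 * m (⟨H.loopAt l, hwm⟩, 0) + q l 1 * m (⟨H.loopAt l, hwm⟩, 1) := by
        rw [Matrix.mulVec, dotProduct]
        rw [sum_two_support _ ((⟨H.loopAt l, hwm⟩ : {x // x ∈ H.vs}), (0 : Fin 2))
          ((⟨H.loopAt l, hwm⟩ : {x // x ∈ H.vs}), (1 : Fin 2)) (by simp) ?_]
        · simp [rigidityMatrix]
        · rintro ⟨v, i⟩ h1 h2
          by_cases hvv : (v : V) = H.loopAt l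
          · exfalso
            have hveq : v = (⟨H.loopAt l, hwm⟩ : {x // x ∈ H.vs}) := Subtype.ext hvv
            fin_cases i
            · exact h1 (by rw [hveq]; rfl)
            · exact h2 (by rw [hveq]; rfl)
          · simp [rigidityMatrix, hvv]
      rw [hEval, Pi.zero_apply] at h0
      rw [hql l γ hla, hQ γ] at h0
      have hsub : (⟨H.loopAt l, hwm⟩ : {x // x ∈ H.vs}) = ⟨act.toV γ v₀, hvmem γ⟩ :=
        Subtype.ext hla
      rw [hsub] at h0
      simp only [Matrix.cons_val_zero, Matrix.cons_val_one, Matrix.head_cons] at h0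
      have e0 : m (⟨act.toV γ v₀, hvmem γ⟩, 0) = m' γ 0 := rfl
      have e1 : m (⟨act.toV γ v₀, hvmem γ⟩, 1) = m' γ 1 := rfl
      rw [e0, e1] at h0
      linarith
    -- edge equations
    have hedgeRaw : ∀ γ : Γ,
        ((P γ 0 - P (g*γ) 0) * m' γ 0 + (P (g*γ) 0 - P γ 0) * m' (g*γ) 0)
      + ((P γ 1 - P (g*γ) 1) * m' γ 1 + (P (g*γ) 1 - P γ 1) * m' (g*γ) 1) = 0 := by
      intro γ
      have hab : act.toV γ v₀ ≠ act.toV (g * γ) v₀ := by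
        intro h
        have h2 : γ = g * γ := hfree h
        exact hg1 (right_eq_mul.mp h2)
      have ha : act.toV γ v₀ ∈ H.vs := hvmem γ
      have hb : act.toV (g * γ) v₀ ∈ H.vs := hvmem (g * γ)
      have h0 := congrFun hm (Sum.inl ⟨s(act.toV γ v₀, act.toV (g * γ) v₀), hemem γ⟩)
      have hMval : ∀ c : {x // x ∈ H.vs} × Fin 2,
          rigidityMatrix H p q (Sum.inl ⟨s(act.toV γ v₀, act.toV (g * γ) v₀), hemem γ⟩) c =
          ((if (c.1 : V) = act.toV γ v₀ then
              p (act.toV γ v₀) c.2 - p (act.toV (g * γ) v₀) c.2 else 0) +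
           (if (c.1 : V) = act.toV (g * γ) v₀ then
              p (act.toV (g * γ) v₀) c.2 - p (act.toV γ v₀) c.2 else 0)) := by
        intro c
        simp [rigidityMatrix]
      have hEval : (rigidityMatrix H p q).mulVec m
            (Sum.inl ⟨s(act.toV γ v₀, act.toV (g * γ) v₀), hemem γ⟩) =
          (∑ c : {x // x ∈ H.vs} × Fin 2, (if (c.1 : V) = act.toV γ v₀ then
              p (act.toV γ v₀) c.2 - p (act.toV (g * γ) v₀) c.2 else 0) * m c)
        + (∑ c : {x // x ∈ H.vs} × Fin 2, (if (c.1 : V) = act.toV (g * γ) v₀ then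
              p (act.toV (g * γ) v₀) c.2 - p (act.toV γ v₀) c.2 else 0) * m c) := by
        rw [Matrix.mulVec, dotProduct, ← Finset.sum_add_distrib]
        exact Finset.sum_congr rfl fun c _ => by rw [hMval c]; ring
      have hA : (∑ c : {x // x ∈ H.vs} × Fin 2, (if (c.1 : V) = act.toV γ v₀ then
              p (act.toV γ v₀) c.2 - p (act.toV (g * γ) v₀) c.2 else 0) * m c) =
          (P γ 0 - P (g*γ) 0) * m' γ 0 + (P γ 1 - P (g*γ) 1) * m' γ 1 := by
        rw [sum_two_support _ ((⟨act.toV γ v₀, ha⟩ : {x // x ∈ H.vs}), (0 : Fin 2))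
          ((⟨act.toV γ v₀, ha⟩ : {x // x ∈ H.vs}), (1 : Fin 2)) (by simp) ?_]
        · simp only [if_pos rfl]
          rw [hpP γ, hpP (g * γ)]
          rfl
        · rintro ⟨v, i⟩ h1 h2
          by_cases hvv : (v : V) = act.toV γ v₀
          · exfalso
            have hveq : v = (⟨act.toV γ v₀, ha⟩ : {x // x ∈ H.vs}) := Subtype.ext hvv
            fin_cases i
            · exact h1 (by rw [hveq]; rfl)
            · exact h2 (by rw [hveq]; rfl)
          · exact mul_eq_zero_of_left (if_neg hvv) _
      have hB : (∑ c : {x // x ∈ H.vs} × Fin 2, (if (c.1 : V) = act.toV (g * γ) v₀ then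
              p (act.toV (g * γ) v₀) c.2 - p (act.toV γ v₀) c.2 else 0) * m c) =
          (P (g*γ) 0 - P γ 0) * m' (g*γ) 0 + (P (g*γ) 1 - P γ 1) * m' (g*γ) 1 := by
        rw [sum_two_support _ ((⟨act.toV (g * γ) v₀, hb⟩ : {x // x ∈ H.vs}), (0 : Fin 2))
          ((⟨act.toV (g * γ) v₀, hb⟩ : {x // x ∈ H.vs}), (1 : Fin 2)) (by simp) ?_]
        · simp only [if_pos rfl]
          rw [hpP γ, hpP (g * γ)]
          rfl
        · rintro ⟨v, i⟩ h1 h2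
          by_cases hvv : (v : V) = act.toV (g * γ) v₀
          · exfalso
            have hveq : v = (⟨act.toV (g * γ) v₀, hb⟩ : {x // x ∈ H.vs}) := Subtype.ext hvv
            fin_cases i
            · exact h1 (by rw [hveq]; rfl)
            · exact h2 (by rw [hveq]; rfl)
          · exact mul_eq_zero_of_left (if_neg hvv) _
      rw [hEval, hA, hB, Pi.zero_apply] at h0
      linarith
    -- decomposition of the motion
    have hsdec : ∀ γ : Γ, m' γ 0 = sc γ * P γ 0 ∧ m' γ 1 = sc γ * P γ 1 := by
      intro γ
      have h1 := hloopEq γ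
      have h2 := hPnorm γ
      constructor
      · simp only [hscdef]
        linear_combination (-(m' γ 0)) * h2 + (P γ 1) * h1
      · simp only [hscdef]
        linear_combination (-(m' γ 1)) * h2 - (P γ 0) * h1
    have hstep : ∀ γ : Γ, sc (g * γ) = - sc γ := by
      intro γ
      have he := hedgeRaw γ
      have h2 := hPnorm γ
      have hpyth : Real.sin θ ^ 2 + Real.cos θ ^ 2 = 1 := Real.sin_sq_add_cos_sq θ
      obtain ⟨hd0, hd1⟩ := hsdec γ
      obtain ⟨hd0', hd1'⟩ := hsdec (g * γ)
      have hB0 : P (g*γ) 0 = Real.cos θ * P γ 0 - Real.sin θ * P γ 1 := by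
        rw [hPg γ]; simp
      have hB1 : P (g*γ) 1 = Real.sin θ * P γ 0 + Real.cos θ * P γ 1 := by
        rw [hPg γ]; simp
      rw [hd0, hd1, hd0', hd1', hB0, hB1] at he
      have hfac : (sc γ + sc (g*γ)) * (1 - Real.cos θ) = 0 := by
        linear_combination he - ((sc γ + sc (g*γ)) * (1 - Real.cos θ)) * h2
          - (sc (g*γ) * (P γ 0 ^ 2 + P γ 1 ^ 2)) * hpyth
      rcases mul_eq_zero.mp hfac with h | h
      · linarith
      · exfalso
        apply hcosθ
        linarith
    have hiter : ∀ (k : ℕ) (γ : Γ), sc (g ^ k * γ) = (-1 : ℝ) ^ k * sc γ := by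
      intro k
      induction k with
      | zero => intro γ; simp
      | succ k ih =>
        intro γ
        have hgp : g ^ (k+1) * γ = g ^ k * (g * γ) := by rw [pow_succ]; group
        rw [hgp, ih (g * γ), hstep γ, pow_succ]
        ring
    have hsc0 : ∀ γ : Γ, sc γ = 0 := by
      intro γ
      have h1 := hiter n γ
      have h2 : g ^ n = 1 := by rw [← hord]; exact pow_orderOf_eq_one g
      rw [h2, one_mul, Odd.neg_one_pow hodd] at h1
      linarith
    funext c
    obtain ⟨⟨v, hv⟩, i⟩ := c
    have hv' := hv
    rw [hvs] at hv'
    obtain ⟨γ, -, hγ⟩ := Finset.mem_image.mp hv'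
    have hsub : (⟨v, hv⟩ : {x // x ∈ H.vs}) = ⟨act.toV γ v₀, hvmem γ⟩ := Subtype.ext hγ.symm
    rw [Pi.zero_apply, hsub]
    obtain ⟨hd0, hd1⟩ := hsdec γ
    have h0' : m' γ 0 = 0 := by rw [hd0, hsc0, zero_mul]
    have h1' : m' γ 1 = 0 := by rw [hd1, hsc0, zero_mul]
    have : m' γ i = 0 := by
      fin_cases i
      · exact h0'
      · exact h1'
    exact this
  -- injectivity of p on vertices
  have hinjOn : Set.InjOn p ↑H.vs := by
    intro v hv v' hv' hpp
    rw [Finset.mem_coe, hvs] at hv hv'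
    obtain ⟨γ, -, rfl⟩ := Finset.mem_image.mp hv
    obtain ⟨γ', -, rfl⟩ := Finset.mem_image.mp hv'
    rw [hpv γ, hpv γ'] at hpp
    rw [hPinj γ γ' hpp]
  -- symmetry of the framework
  have hsym1 : ∀ (γ : Γ), ∀ v ∈ H.vs, (τ γ).mulVec (p v) = p (act.toV γ v) := by
    intro γ v hv
    rw [hvs] at hv
    obtain ⟨δ, -, rfl⟩ := Finset.mem_image.mp hv
    rw [hpv δ, Matrix.mulVec_mulVec, ← map_mul]
    have hv2 : act.toV γ (act.toV δ v₀) = act.toV (γ * δ) v₀ := by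
      rw [map_mul act.toV γ δ, Equiv.Perm.mul_apply]
    rw [hv2, hpv (γ * δ)]
  have hsym2 : ∀ (γ : Γ), ∀ l ∈ H.ls, (τ γ).mulVec (q l) = q (act.toL γ l) := by
    intro γ l hl
    have hlv := H.ls_mem l hl
    rw [hvs] at hlv
    obtain ⟨δ, -, hδ⟩ := Finset.mem_image.mp hlv
    rw [hql l δ hδ.symm, Matrix.mulVec_mulVec, ← map_mul]
    have h2 : H.loopAt (act.toL γ l) = act.toV (γ * δ) v₀ := by
      rw [act.loop_compat γ l hl, ← hδ, map_mul act.toV γ δ, Equiv.Perm.mul_apply]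
    rw [hql (act.toL γ l) (γ * δ) h2]
  have hsym3 : ∀ (γ : Γ), τ γ = -1 → ∀ l ∈ H.ls, act.toL γ l = l →
      (τ γ).mulVec (q l) = - q (act.toL γ l) := by
    intro γ hτγ l hl hfix
    exfalso
    have hγ1 : γ = 1 := hsq1 γ (act.loop_fix_order γ l hl hfix)
    rw [hγ1, map_one] at hτγ
    have h00 := congrFun (congrFun hτγ 0) 0
    simp only [Matrix.one_apply_eq, Matrix.neg_apply] at h00
    norm_num [Matrix.one_apply] at h00
  have hsym4 : ∀ (γ : Γ), (τ γ).det = -1 → ∀ l ∈ H.ls, act.toL γ l = l →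
      ((τ γ).mulVec (q l) = q (act.toL γ l) ∨
        (τ γ).mulVec (q l) = - q (act.toL γ l)) := by
    intro γ hdet l hl hfix
    exfalso
    obtain ⟨a, ha⟩ := hτang γ
    rw [ha, ang_det] at hdet
    norm_num at hdet
  -- rank and independence
  have hMinj : Function.Injective (rigidityMatrix H p q).mulVecLin := by
    rw [← LinearMap.ker_eq_bot]
    apply LinearMap.ker_eq_bot'.mpr
    intro m hm0
    exact hker m (by simpa [Matrix.mulVecLin_apply] using hm0)
  have hcards : Fintype.card ({x // x ∈ H.vs} × Fin 2) = 2 * H.vs.card := by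
    simp only [Fintype.card_prod, Fintype.card_coe, Fintype.card_fin]
    ring
  have hrank : (rigidityMatrix H p q).rank = 2 * H.vs.card := by
    rw [Matrix.rank, LinearMap.finrank_range_of_inj hMinj,
      Module.finrank_fintype_fun_eq_card, hcards]
  have hrowcard : Fintype.card ({x // x ∈ H.es} ⊕ {x // x ∈ H.ls}) = 2 * H.vs.card := by
    simp only [Fintype.card_sum, Fintype.card_coe, hcard_es, hcard_ls, hcard_vs]
    omega
  have hTker : LinearMap.ker (Matrix.transpose (rigidityMatrix H p q)).mulVecLin = ⊥ := by
    have hfr := LinearMap.finrank_range_add_finrank_ker (Matrix.transpose (rigidityMatrix H p q)).mulVecLin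
    have h1 : Module.finrank ℝ (LinearMap.range (Matrix.transpose (rigidityMatrix H p q)).mulVecLin) =
        2 * H.vs.card := by
      rw [← Matrix.rank, Matrix.rank_transpose]
      exact hrank
    rw [h1, Module.finrank_fintype_fun_eq_card, hrowcard] at hfr
    have h2 : Module.finrank ℝ (LinearMap.ker (Matrix.transpose (rigidityMatrix H p q)).mulVecLin) = 0 := by
      omega
    exact Submodule.finrank_eq_zero.mp h2
  have hli : LinearIndependent ℝ (fun r => rigidityMatrix H p q r) := by
    rw [Fintype.linearIndependent_iff]
    intro cf hcf
    have h0 : (Matrix.transpose (rigidityMatrix H p q)).mulVec cf = 0 := by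
      funext c
      have hc := congrFun hcf c
      rw [Finset.sum_apply] at hc
      simp only [Pi.smul_apply, smul_eq_mul, Pi.zero_apply] at hc
      rw [Pi.zero_apply, Matrix.mulVec, dotProduct]
      simp only [Matrix.transpose_apply]
      rw [← hc]
      exact Finset.sum_congr rfl fun r _ => mul_comm _ _
    have hcf0 : cf = 0 := by
      apply LinearMap.ker_eq_bot.mp hTker
      rw [map_zero, Matrix.mulVecLin_apply]
      exact h0
    intro r
    rw [hcf0]
    rfl
  exact ⟨p, q, hinjOn, ⟨hsym1, fun γ _ => hsym2 γ, hsym3, hsym4⟩, hrank, hli⟩
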